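/- If Q is a self-adjoint operator on a Hilbert space H and S : H → H is a bounded invertible linear operator with bounded inverse, then for each α ∈ {−,0,+}, the signature σ_α(S*QS) equals σ_α(Q), where σ_α(Q) is the supremum of dimensions of finite-dimensional subspaces V of dom(Q) on which Q is negative definite (α = −), identically zero (α = 0), or positive definite (α = +). -/

import Mathlib

open Module RCLike

variable {𝕜 H : Type*} [RCLike 𝕜] [NormedAddCommGroup H] [InnerProductSpace 𝕜 H]
  [CompleteSpace H]

/-- σ₋: supremum of dimensions of nontrivial finite-dimensional subspaces on which
the quadratic form of `Q` is negative definite. -/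
noncomputable def opSigNeg (Q : H →ₗ[𝕜] H) : ℕ∞ :=
  sSup {n : ℕ∞ | ∃ V : Submodule 𝕜 H, V ≠ ⊥ ∧ FiniteDimensional 𝕜 V ∧
    n = (Module.finrank 𝕜 V : ℕ∞) ∧ ∀ x ∈ V, x ≠ 0 → re (inner 𝕜 x (Q x) : 𝕜) < 0}

/-- σ₀: supremum of dimensions of nontrivial finite-dimensional subspaces on which
`Q` is identically zero. -/
noncomputable def sigZero (Q : H →ₗ[𝕜] H) : ℕ∞ :=
  sSup {n : ℕ∞ | ∃ V : Submodule 𝕜 H, V ≠ ⊥ ∧ FiniteDimensional 𝕜 V ∧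
    n = (Module.finrank 𝕜 V : ℕ∞) ∧ ∀ x ∈ V, Q x = 0}

/-- σ₊: supremum of dimensions of nontrivial finite-dimensional subspaces on which
the quadratic form of `Q` is positive definite. -/
noncomputable def opSigPos (Q : H →ₗ[𝕜] H) : ℕ∞ :=
  sSup {n : ℕ∞ | ∃ V : Submodule 𝕜 H, V ≠ ⊥ ∧ FiniteDimensional 𝕜 V ∧
    n = (Module.finrank 𝕜 V : ℕ∞) ∧ ∀ x ∈ V, x ≠ 0 → 0 < re (inner 𝕜 x (Q x) : 𝕜)}

set_option linter.unusedSectionVars false in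
lemma sig_set_subset (e : H ≃ₗ[𝕜] H) (P P' : H → Prop) (h : ∀ x, P x → P' (e x)) :
    {n : ℕ∞ | ∃ V : Submodule 𝕜 H, V ≠ ⊥ ∧ FiniteDimensional 𝕜 V ∧
      n = (Module.finrank 𝕜 V : ℕ∞) ∧ ∀ x ∈ V, P x} ⊆
    {n : ℕ∞ | ∃ V : Submodule 𝕜 H, V ≠ ⊥ ∧ FiniteDimensional 𝕜 V ∧
      n = (Module.finrank 𝕜 V : ℕ∞) ∧ ∀ x ∈ V, P' x} := by
  rintro n ⟨V, hV, hfd, hn, hP⟩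
  refine ⟨V.map (e : H →ₗ[𝕜] H), ?_, ?_, ?_, ?_⟩
  · intro hbot
    exact hV (Submodule.map_injective_of_injective e.injective (by simpa using hbot))
  · exact Module.Finite.map V (e : H →ₗ[𝕜] H)
  · rw [hn, LinearEquiv.finrank_map_eq]
  · rintro x ⟨y, hy, rfl⟩
    exact h y (hP y hy)

/-- Sylvester's law of inertia: the signature is invariant under congruence by a
bounded invertible operator with bounded inverse. -/
theorem sylvester_law_of_inertia (Q : H →ₗ[𝕜] H) (hQ : LinearMap.IsSymmetric Q)
    (S : H ≃L[𝕜] H) :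
    opSigNeg ((ContinuousLinearMap.adjoint (S : H →L[𝕜] H)).toLinearMap ∘ₗ Q ∘ₗ
        (S : H →L[𝕜] H).toLinearMap) = opSigNeg Q ∧
    sigZero ((ContinuousLinearMap.adjoint (S : H →L[𝕜] H)).toLinearMap ∘ₗ Q ∘ₗ
        (S : H →L[𝕜] H).toLinearMap) = sigZero Q ∧
    opSigPos ((ContinuousLinearMap.adjoint (S : H →L[𝕜] H)).toLinearMap ∘ₗ Q ∘ₗ
        (S : H →L[𝕜] H).toLinearMap) = opSigPos Q := by
  set T := (S : H →L[𝕜] H) with hT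
  set Q' := (ContinuousLinearMap.adjoint T).toLinearMap ∘ₗ Q ∘ₗ T.toLinearMap with hQ'
  have key : ∀ x : H, (inner 𝕜 x (Q' x) : 𝕜) = inner 𝕜 (S x) (Q (S x)) := by
    intro x
    simp [hQ', hT, ContinuousLinearMap.adjoint_inner_right]
  have adj_inj : Function.Injective (ContinuousLinearMap.adjoint T) := by
    intro y z hyz
    have := congrArg (ContinuousLinearMap.adjoint ((S.symm : H →L[𝕜] H))) hyz
    have h1 : ∀ w : H, ContinuousLinearMap.adjoint ((S.symm : H →L[𝕜] H))
        (ContinuousLinearMap.adjoint T w) = w := by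
      intro w
      rw [← ContinuousLinearMap.comp_apply, ← ContinuousLinearMap.adjoint_comp]
      have : T.comp (S.symm : H →L[𝕜] H) = ContinuousLinearMap.id 𝕜 H := by
        ext v; simp [hT]
      rw [this, ContinuousLinearMap.adjoint_id, ContinuousLinearMap.id_apply]
    rw [← h1 y, ← h1 z, hyz]
  have zero_iff : ∀ x : H, Q' x = 0 ↔ Q (S x) = 0 := by
    intro x
    constructor
    · intro h
      apply adj_inj
      simpa [hQ', hT] using h
    · intro h
      show (ContinuousLinearMap.adjoint T) (Q (S x)) = 0; simp [h]
  have ne_iff : ∀ x : H, x ≠ 0 ↔ S x ≠ 0 := by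
    intro x
    rw [not_iff_not]
    exact ⟨fun h => by simp [h], fun h => S.injective (by simpa using h)⟩
  have symm_cancel : ∀ x : H, S (S.symm x) = x := fun x => S.apply_symm_apply x
  have hsne : ∀ x : H, S.symm x ≠ 0 → x ≠ 0 := fun x h h0 => h (by simp [h0])
  refine ⟨?_, ?_, ?_⟩
  · unfold opSigNeg
    congr 1
    apply Set.Subset.antisymm
    · refine sig_set_subset S.toLinearEquiv _ _ (fun x hx hne => ?_)
      have hx' := hx ((ne_iff x).mpr (by simpa using hne))
      rw [key] at hx'
      simpa using hx'
    · refine sig_set_subset S.symm.toLinearEquiv _ _ (fun x hx hne => ?_)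
      have hne' : S.symm x ≠ 0 := by simpa using hne
      have hx' := hx (hsne x hne')
      have : (inner 𝕜 (S.symm x) (Q' (S.symm x)) : 𝕜) = inner 𝕜 x (Q x) := by
        rw [key, symm_cancel]
      have hc : S.symm.toLinearEquiv x = S.symm x := rfl
      rw [hc, show re (inner 𝕜 (S.symm x) (Q' (S.symm x)) : 𝕜)
          = re (inner 𝕜 x (Q x) : 𝕜) from congrArg re this]
      exact hx'
  · unfold sigZero
    congr 1
    apply Set.Subset.antisymm
    · refine sig_set_subset S.toLinearEquiv _ _ (fun x hx => ?_)
      have := (zero_iff x).mp hx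
      simpa using this
    · refine sig_set_subset S.symm.toLinearEquiv _ _ (fun x hx => ?_)
      have : Q (S (S.symm x)) = 0 := by rw [symm_cancel]; exact hx
      have h2 := (zero_iff (S.symm x)).mpr this
      simpa using h2
  · unfold opSigPos
    congr 1
    apply Set.Subset.antisymm
    · refine sig_set_subset S.toLinearEquiv _ _ (fun x hx hne => ?_)
      have hx' := hx ((ne_iff x).mpr (by simpa using hne))
      rw [key] at hx'
      simpa using hx'
    · refine sig_set_subset S.symm.toLinearEquiv _ _ (fun x hx hne => ?_)
      have hne' : S.symm x ≠ 0 := by simpa using hne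
      have hx' := hx (hsne x hne')
      have : (inner 𝕜 (S.symm x) (Q' (S.symm x)) : 𝕜) = inner 𝕜 x (Q x) := by
        rw [key, symm_cancel]
      have hc : S.symm.toLinearEquiv x = S.symm x := rfl
      rw [hc, show re (inner 𝕜 (S.symm x) (Q' (S.symm x)) : 𝕜)
          = re (inner 𝕜 x (Q x) : 𝕜) from congrArg re this]
      exact hx'
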